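/- Let E be a real inner product space, p ≥ 2 an integer, ε > 0, N > 1. Let g, u ∈ E with r = ‖u‖ > 0, and suppose ‖g + (N r^{p−2} / ε) • u‖ ≤ r^{p−1} / ε. Then ⟨g, −u⟩ ≥ ε ‖g‖² / (2 N r^{p−2}) + (N² − 1) r^p / (2 N ε). -/

import Mathlib

open Real
open scoped RealInnerProductSpace

/-- The key inequality in the proof of Lemma 2 of the paper
(with `g = ∇f(y)`, `u = y − x`, `r = ‖u‖`): if
`‖g + (N r^{p−2}/ε) u‖ ≤ r^{p−1}/ε` then
`⟪g, −u⟫ ≥ ε ‖g‖²/(2 N r^{p−2}) + (N²−1) r^p/(2 N ε)`. -/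
theorem gradient_update_key_inequality
    {E : Type*} [NormedAddCommGroup E] [InnerProductSpace ℝ E]
    (p : ℕ) (hp : 2 ≤ p) (ε N : ℝ) (hε : 0 < ε) (hN : 1 < N)
    (g u : E) (hu : 0 < ‖u‖)
    (hineq : ‖g + ((N * ‖u‖ ^ (p - 2)) / ε) • u‖ ≤ ‖u‖ ^ (p - 1) / ε) :
    ε * ‖g‖ ^ 2 / (2 * N * ‖u‖ ^ (p - 2)) + (N ^ 2 - 1) * ‖u‖ ^ p / (2 * N * ε)
      ≤ ⟪g, -u⟫ := by
  obtain ⟨q, rfl⟩ : ∃ q, p = q + 2 := ⟨p - 2, by omega⟩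
  simp only [show q + 2 - 2 = q from rfl, show q + 2 - 1 = q + 1 from rfl] at *
  set r := ‖u‖ with hr
  have hN0 : 0 < N := by linarith
  have htq : (0:ℝ) < r ^ q := pow_pos hu q
  have hc : 0 < N * r ^ q / ε := by positivity
  have h1 : ‖g + ((N * r ^ q) / ε) • u‖ ^ 2 ≤ (r ^ (q + 1) / ε) ^ 2 := by
    apply pow_le_pow_left₀ (norm_nonneg _) hineq
  rw [norm_add_sq_real, inner_smul_right, norm_smul, Real.norm_eq_abs,
    abs_of_pos hc] at h1
  have e1 : r ^ (q + 1) = r ^ q * r := pow_succ r q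
  have e2 : r ^ (q + 2) = r ^ q * r ^ 2 := pow_add r q 2
  rw [inner_neg_right, e2]
  rw [e1] at h1
  set t := r ^ q with ht
  rw [div_add_div _ _ (by positivity) (by positivity), div_le_iff₀ (by positivity)]
  have h2 : ε ^ 2 * ‖g‖ ^ 2 + 2 * N * t * ε * ⟪g, u⟫ + N ^ 2 * t ^ 2 * r ^ 2
      ≤ t ^ 2 * r ^ 2 := by
    field_simp at h1
    rw [← hr] at h1
    nlinarith [h1, mul_pos hε (mul_pos hε hε)]
  nlinarith [mul_le_mul_of_nonneg_left h2 (by linarith : (0:ℝ) ≤ 2 * N)]
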